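/- For any four-party pure quantum state |ψ⟩ on H_A ⊗ H_B ⊗ H_C ⊗ H_D, the rank of the reduced density matrix on A is at most the product of the ranks of the reduced density matrices on AB and on AC: r_A ≤ r_{AB} · r_{AC}. -/

import Mathlib

open Matrix

/-- Any matrix over `ℂ` has `rank` many columns spanning its column space:
every column is a linear combination of the selected columns, with coefficients
independent of the row. -/
lemma exists_spanning_cols {K L : Type*} [Fintype K] [Fintype L] (M : Matrix K L ℂ) :
    ∃ s : Fin M.rank → L, ∃ lam : L → Fin M.rank → ℂ,
      ∀ k l, M k l = ∑ m, lam l m * M k (s m) := by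
  classical
  obtain ⟨b, hbsub, hbspan, hbli⟩ := exists_linearIndependent ℂ (Set.range Mᵀ)
  have hbfin : b.Finite := (Set.finite_range Mᵀ).subset hbsub
  haveI : Fintype b := hbfin.fintype
  have hcard : b.toFinset.card = M.rank := by
    rw [M.rank_eq_finrank_span_cols]
    change b.toFinset.card = Module.finrank ℂ (Submodule.span ℂ (Set.range Mᵀ))
    rw [← hbspan, finrank_span_set_eq_card hbli]
  have e : Fin M.rank ≃ b := by
    refine (Fintype.equivFinOfCardEq ?_).symm
    rw [← Set.toFinset_card, hcard]
  have hmem : ∀ m : Fin M.rank, ((e m : K → ℂ)) ∈ Set.range Mᵀ := fun m => hbsub (e m).2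
  choose s hs using hmem
  refine ⟨s, ?_⟩
  have hcol : ∀ l, Mᵀ l ∈ Submodule.span ℂ (Set.range fun m => Mᵀ (s m)) := by
    intro l
    have h1 : Mᵀ l ∈ Submodule.span ℂ b := by
      rw [hbspan]; exact Submodule.subset_span ⟨l, rfl⟩
    refine Submodule.span_le.2 ?_ h1
    intro x hx
    refine Submodule.subset_span ⟨e.symm ⟨x, hx⟩, ?_⟩
    show Mᵀ (s (e.symm ⟨x, hx⟩)) = x
    rw [hs]
    simp
  have hfun : ∀ l, ∃ c : Fin M.rank → ℂ, ∑ m, c m • Mᵀ (s m) = Mᵀ l := fun l =>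
    (Submodule.mem_span_range_iff_exists_fun ℂ).1 (hcol l)
  choose lam hlam using hfun
  refine ⟨lam, fun k l => ?_⟩
  have := congrFun (hlam l) k
  simp only [Finset.sum_apply, Pi.smul_apply, smul_eq_mul, transpose_apply] at this
  exact this.symm

/-- Rank of a sum of two matrices is at most the sum of the ranks. -/
lemma matrix_rank_add_le {K L : Type*} [Fintype K] [Fintype L]
    (M N : Matrix K L ℂ) : (M + N).rank ≤ M.rank + N.rank := by
  classical
  have hr : LinearMap.range (M + N).mulVecLin ≤
      LinearMap.range M.mulVecLin ⊔ LinearMap.range N.mulVecLin := by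
    rw [Matrix.mulVecLin_add]
    rintro x ⟨v, rfl⟩
    exact Submodule.add_mem_sup ⟨v, rfl⟩ ⟨v, rfl⟩
  calc (M + N).rank ≤ Module.finrank ℂ
        (LinearMap.range M.mulVecLin ⊔ LinearMap.range N.mulVecLin : Submodule ℂ (K → ℂ)) :=
        Submodule.finrank_mono hr
    _ ≤ M.rank + N.rank := Submodule.finrank_add_le_finrank_add_finrank _ _

/-- Rank of a finite sum of matrices is at most the sum of the ranks. -/
lemma matrix_rank_sum_le {K L ι : Type*} [Fintype K] [Fintype L]
    (t : Finset ι) (M : ι → Matrix K L ℂ) :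
    (∑ i ∈ t, M i).rank ≤ ∑ i ∈ t, (M i).rank := by
  classical
  induction t using Finset.induction_on with
  | empty => simp [Matrix.rank_zero]
  | insert _ _ hx ih =>
      rw [Finset.sum_insert hx, Finset.sum_insert hx]
      exact (matrix_rank_add_le _ _).trans (Nat.add_le_add_left ih _)

theorem rank_A_le_rank_AB_mul_rank_AC
    {A B C D : Type*} [Fintype A] [Fintype B] [Fintype C] [Fintype D]
    (ψ : A → B → C → D → ℂ) (hψ : ψ ≠ 0) :
    (Matrix.of fun (a : A) (x : B × C × D) => ψ a x.1 x.2.1 x.2.2).rank ≤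
      (Matrix.of fun (p : A × B) (x : C × D) => ψ p.1 p.2 x.1 x.2).rank *
      (Matrix.of fun (p : A × C) (x : B × D) => ψ p.1 x.1 p.2 x.2).rank := by
  classical
  set MAB : Matrix (A × B) (C × D) ℂ :=
    Matrix.of fun (p : A × B) (x : C × D) => ψ p.1 p.2 x.1 x.2 with hMAB
  set MAC : Matrix (A × C) (B × D) ℂ :=
    Matrix.of fun (p : A × C) (x : B × D) => ψ p.1 x.1 p.2 x.2 with hMAC
  obtain ⟨s, lam, hlam⟩ := exists_spanning_cols MAC
  set N : Matrix A (C × Fin MAC.rank) ℂ :=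
    Matrix.of fun a cm => ψ a (s cm.2).1 cm.1 (s cm.2).2 with hN
  set Kmat : Matrix (C × Fin MAC.rank) (B × C × D) ℂ :=
    Matrix.of fun cm x => if x.2.1 = cm.1 then lam (x.1, x.2.2) cm.2 else 0 with hK
  have hfact : (Matrix.of fun (a : A) (x : B × C × D) => ψ a x.1 x.2.1 x.2.2) = N * Kmat := by
    ext a x
    rw [Matrix.mul_apply]
    rw [Fintype.sum_prod_type]
    simp only [hN, hK, Matrix.of_apply, mul_ite, mul_zero]
    rw [Finset.sum_comm]
    simp only [Finset.sum_ite_eq, Finset.mem_univ, if_true]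
    have := hlam (a, x.2.1) (x.1, x.2.2)
    simp only [hMAC, Matrix.of_apply] at this
    simpa [mul_comm] using this
  rw [hfact]
  refine (Matrix.rank_mul_le_left N Kmat).trans ?_
  set N' : Fin MAC.rank → Matrix A (C × Fin MAC.rank) ℂ := fun m =>
    Matrix.of fun a ck => if ck.2 = m then ψ a (s m).1 ck.1 (s m).2 else 0 with hN'
  have hNsum : N = ∑ m, N' m := by
    ext a ck
    simp only [hN, hN', Matrix.of_apply, Matrix.sum_apply]
    simp
  have hrankN' : ∀ m, (N' m).rank ≤ MAB.rank := by
    intro m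
    set Rsel : Matrix A (A × B) ℂ :=
      Matrix.of fun a p => if p = (a, (s m).1) then 1 else 0 with hR
    set Csel : Matrix (C × D) (C × Fin MAC.rank) ℂ :=
      Matrix.of fun cd ck => if cd.2 = (s m).2 ∧ ck = (cd.1, m) then 1 else 0 with hC
    have hprod : N' m = Rsel * MAB * Csel := by
      have h1 : Rsel * MAB = Matrix.of fun (a : A) (cd : C × D) =>
          ψ a (s m).1 cd.1 cd.2 := by
        ext a cd
        rw [Matrix.mul_apply]
        simp only [hR, hMAB, Matrix.of_apply, ite_mul, one_mul, zero_mul]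
        rw [Finset.sum_ite_eq' Finset.univ ((a, (s m).1) : A × B)
          (fun p => ψ p.1 p.2 cd.1 cd.2)]
        simp
      rw [h1]
      ext a ck
      obtain ⟨c, k⟩ := ck
      rw [Matrix.mul_apply]
      by_cases hm : k = m
      · subst hm
        rw [Finset.sum_eq_single ((c, (s k).2) : C × D)]
        · simp [hN', hC]
        · rintro ⟨c', d'⟩ - hcd
          simp only [hC, Matrix.of_apply, mul_ite, mul_one, mul_zero]
          rw [if_neg]
          rintro ⟨h2, h3⟩
          injection h3 with h3a h3b
          exact hcd (by rw [← h3a, h2])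
        · simp
      · simp only [hN', Matrix.of_apply]
        rw [if_neg hm]
        symm
        apply Finset.sum_eq_zero
        rintro ⟨c', d'⟩ -
        simp only [hC, Matrix.of_apply, mul_ite, mul_one, mul_zero]
        rw [if_neg]
        rintro ⟨-, h3⟩
        injection h3 with h3a h3b
        exact hm h3b
    rw [hprod]
    exact (Matrix.rank_mul_le_left _ _).trans (Matrix.rank_mul_le_right _ _)
  calc N.rank ≤ ∑ m, (N' m).rank := by rw [hNsum]; exact matrix_rank_sum_le _ _
    _ ≤ ∑ _m : Fin MAC.rank, MAB.rank := Finset.sum_le_sum fun m _ => hrankN' m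
    _ = MAB.rank * MAC.rank := by simp [mul_comm]
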